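/- For a uniformly random r-matching on [rn] and any 1 ≤ k ≤ rn − 1, the expected value of X_k^{(r)} equals k − r·C(k,r)/C(rn−1, r−1), where C denotes the binomial coefficient. -/

import Mathlib

open Finset
open scoped Classical

/-- An `r`-matching on `[r*n] = {1,...,r*n}`: a partition of `Finset.Icc 1 (r*n)`
into `r`-element blocks. -/
def IsRMatching (r n : ℕ) (M : Finset (Finset ℕ)) : Prop :=
  (∀ e ∈ M, e.card = r) ∧
  (∀ e ∈ M, ∀ f ∈ M, e ≠ f → Disjoint e f) ∧
  M.biUnion id = Finset.Icc 1 (r * n)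

/-- The finite set of all `r`-matchings on `[r*n]`. -/
noncomputable def matchings (r n : ℕ) : Finset (Finset (Finset ℕ)) :=
  ((Finset.Icc 1 (r * n)).powerset.powerset).filter (IsRMatching r n)

/-- `x_k(M) = Σ_{e ∈ M_k} |e ∩ [k]|`, summed over blocks `e` meeting both `[k]`
and its complement. -/
noncomputable def sockAt (k : ℕ) (M : Finset (Finset ℕ)) : ℕ :=
  ∑ e ∈ M.filter
      (fun e => (e ∩ Finset.Icc 1 k).Nonempty ∧ (e \ Finset.Icc 1 k).Nonempty),
    (e ∩ Finset.Icc 1 k).card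

/-- For `r = 2`: the number of edges with one endpoint in `[k]` and one outside. -/
noncomputable def crossAt (k : ℕ) (M : Finset (Finset ℕ)) : ℕ :=
  (M.filter
      (fun e => (e ∩ Finset.Icc 1 k).Nonempty ∧ (e \ Finset.Icc 1 k).Nonempty)).card

/-- The sock number of a matching on `[2n]`: `max_{1 ≤ k ≤ 2n} x_k(M)`. -/
noncomputable def sockNum (n : ℕ) (M : Finset (Finset ℕ)) : ℕ :=
  (Finset.Icc 1 (2 * n)).sup (fun k => crossAt k M)

set_option maxHeartbeats 1000000

lemma mem_matchings {r n : ℕ} {M : Finset (Finset ℕ)} :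
    M ∈ matchings r n ↔ IsRMatching r n M := by
  constructor
  · exact fun h => (Finset.mem_filter.mp h).2
  · intro h
    refine Finset.mem_filter.mpr ⟨?_, h⟩
    rw [Finset.mem_powerset]
    intro e he
    rw [Finset.mem_powerset]
    calc e ⊆ M.biUnion id := Finset.subset_biUnion_of_mem id he
      _ = _ := h.2.2

lemma blocks_subset {r n : ℕ} {M : Finset (Finset ℕ)} (hM : IsRMatching r n M)
    {e : Finset ℕ} (he : e ∈ M) : e ⊆ Finset.Icc 1 (r * n) :=
  hM.2.2 ▸ Finset.subset_biUnion_of_mem id he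

lemma card_of_matching {r n : ℕ} (hr : 1 ≤ r) {M : Finset (Finset ℕ)}
    (hM : IsRMatching r n M) : M.card = n := by
  have h1 : (M.biUnion id).card = ∑ e ∈ M, (id e).card :=
    Finset.card_biUnion (fun e he f hf hne => hM.2.1 e he f hf hne)
  rw [hM.2.2] at h1
  have h2 : ∑ e ∈ M, (id e).card = M.card * r := by
    simp only [id_eq]
    rw [Finset.sum_congr rfl (fun e he => hM.1 e he), Finset.sum_const, smul_eq_mul]
  rw [h2, Nat.card_Icc] at h1
  have : r * n = M.card * r := by omega
  rw [mul_comm r n] at this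
  exact (Nat.eq_of_mul_eq_mul_right hr this).symm

lemma sum_inter_card {r n k : ℕ} {M : Finset (Finset ℕ)} (hM : IsRMatching r n M)
    (hk : k ≤ r * n) : ∑ e ∈ M, (e ∩ Finset.Icc 1 k).card = k := by
  have hd : ∀ e ∈ M, ∀ f ∈ M, e ≠ f →
      Disjoint (e ∩ Finset.Icc 1 k) (f ∩ Finset.Icc 1 k) := fun e he f hf hne =>
    Finset.disjoint_of_subset_left Finset.inter_subset_left
      (Finset.disjoint_of_subset_right Finset.inter_subset_left (hM.2.1 e he f hf hne))
  have h1 : (M.biUnion (fun e => e ∩ Finset.Icc 1 k)).card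
      = ∑ e ∈ M, (e ∩ Finset.Icc 1 k).card := Finset.card_biUnion hd
  have h2 : M.biUnion (fun e => e ∩ Finset.Icc 1 k) = Finset.Icc 1 k := by
    have h3 : M.biUnion (fun e => e ∩ Finset.Icc 1 k)
        = (M.biUnion id) ∩ Finset.Icc 1 k := by
      ext x
      simp only [Finset.mem_biUnion, Finset.mem_inter, id_eq]
      tauto
    rw [h3, hM.2.2]
    ext x
    simp only [Finset.mem_inter, Finset.mem_Icc]
    omega
  rw [h2, Nat.card_Icc] at h1
  omega

lemma sockAt_add {r n k : ℕ} (hr : 1 ≤ r) {M : Finset (Finset ℕ)}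
    (hM : IsRMatching r n M) (hk : k ≤ r * n) :
    sockAt k M + r * (M.filter (fun e => e ⊆ Finset.Icc 1 k)).card = k := by
  set I := Finset.Icc 1 k with hI
  have hsplit := Finset.sum_filter_add_sum_filter_not M
    (fun e => (e ∩ I).Nonempty ∧ (e \ I).Nonempty) (fun e => (e ∩ I).card)
  have hsub : M.filter (fun e => e ⊆ I)
      ⊆ M.filter (fun e => ¬((e ∩ I).Nonempty ∧ (e \ I).Nonempty)) := by
    intro e he
    rw [Finset.mem_filter] at he ⊢
    refine ⟨he.1, ?_⟩
    rintro ⟨-, h2⟩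
    obtain ⟨x, hx⟩ := h2
    rw [Finset.mem_sdiff] at hx
    exact hx.2 (he.2 hx.1)
  have hzero : ∀ e ∈ M.filter (fun e => ¬((e ∩ I).Nonempty ∧ (e \ I).Nonempty)),
      e ∉ M.filter (fun e => e ⊆ I) → (e ∩ I).card = 0 := by
    intro e he hne
    rw [Finset.mem_filter] at he
    rw [Finset.mem_filter] at hne
    push_neg at hne
    have hns : ¬ e ⊆ I := hne he.1
    have : ¬ (e \ I).Nonempty → e ⊆ I := by
      intro h
      rw [Finset.not_nonempty_iff_eq_empty, Finset.sdiff_eq_empty_iff_subset] at h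
      exact h
    rcases not_and_or.mp he.2 with h | h
    · rw [Finset.not_nonempty_iff_eq_empty] at h
      rw [h, Finset.card_empty]
    · exact absurd (this h) hns
  have heq : ∑ e ∈ M.filter (fun e => ¬((e ∩ I).Nonempty ∧ (e \ I).Nonempty)),
      (e ∩ I).card = ∑ e ∈ M.filter (fun e => e ⊆ I), (e ∩ I).card :=
    (Finset.sum_subset hsub hzero).symm
  have hin : ∑ e ∈ M.filter (fun e => e ⊆ I), (e ∩ I).card
      = r * (M.filter (fun e => e ⊆ I)).card := by
    rw [Finset.sum_congr rfl (fun e he => ?_), Finset.sum_const, smul_eq_mul, mul_comm]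
    rw [Finset.mem_filter] at he
    rw [Finset.inter_eq_left.mpr he.2]
    exact hM.1 e he.1
  have htot := sum_inter_card hM hk
  unfold sockAt
  rw [← hI] at htot ⊢
  omega

noncomputable def pmap (S T I : Finset ℕ) (e1 : S ≃ T) (e2 : ((I \ S) : Finset ℕ) ≃ ((I \ T) : Finset ℕ)) :
    ℕ → ℕ := fun x =>
  if h : x ∈ S then (e1 ⟨x, h⟩ : ℕ)
  else if h2 : x ∈ I \ S then (e2 ⟨x, h2⟩ : ℕ)
  else x

lemma pmap_inv {S T I : Finset ℕ} (hT : T ⊆ I)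
    (e1 : S ≃ T) (e2 : ((I \ S) : Finset ℕ) ≃ ((I \ T) : Finset ℕ)) (x : ℕ) :
    pmap T S I e1.symm e2.symm (pmap S T I e1 e2 x) = x := by
  unfold pmap
  by_cases h : x ∈ S
  · rw [dif_pos h]
    have hm : ((e1 ⟨x, h⟩ : T) : ℕ) ∈ T := (e1 ⟨x, h⟩).2
    rw [dif_pos hm]
    have : (⟨((e1 ⟨x, h⟩ : T) : ℕ), hm⟩ : T) = e1 ⟨x, h⟩ := rfl
    rw [this, Equiv.symm_apply_apply]
  · rw [dif_neg h]
    by_cases h2 : x ∈ I \ S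
    · rw [dif_pos h2]
      have hm : ((e2 ⟨x, h2⟩ : (I \ T : Finset ℕ)) : ℕ) ∈ I \ T := (e2 ⟨x, h2⟩).2
      have hnT : ((e2 ⟨x, h2⟩ : (I \ T : Finset ℕ)) : ℕ) ∉ T := (Finset.mem_sdiff.mp hm).2
      rw [dif_neg hnT, dif_pos hm]
      have : (⟨((e2 ⟨x, h2⟩ : (I \ T : Finset ℕ)) : ℕ), hm⟩ : (I \ T : Finset ℕ)) = e2 ⟨x, h2⟩ := rfl
      rw [this, Equiv.symm_apply_apply]
    · rw [dif_neg h2]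
      have hnI : x ∉ I := fun hI => h2 (Finset.mem_sdiff.mpr ⟨hI, h⟩)
      rw [dif_neg (fun hx => hnI (hT hx)),
        dif_neg (fun hx => hnI (Finset.mem_sdiff.mp hx).1)]

lemma pmap_maps {S T I : Finset ℕ} (hT : T ⊆ I)
    (e1 : S ≃ T) (e2 : ((I \ S) : Finset ℕ) ≃ ((I \ T) : Finset ℕ)) :
    (∀ x ∈ S, pmap S T I e1 e2 x ∈ T) ∧ (∀ x ∈ I, pmap S T I e1 e2 x ∈ I) := by
  constructor
  · intro x hx
    unfold pmap
    rw [dif_pos hx]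
    exact (e1 ⟨x, hx⟩).2
  · intro x hx
    unfold pmap
    by_cases h : x ∈ S
    · rw [dif_pos h]; exact hT (e1 ⟨x, h⟩).2
    · rw [dif_neg h, dif_pos (Finset.mem_sdiff.mpr ⟨hx, h⟩)]
      exact (Finset.mem_sdiff.mp (e2 ⟨x, Finset.mem_sdiff.mpr ⟨hx, h⟩⟩).2).1

lemma image_eq_of_maps {A B : Finset ℕ} {f : ℕ → ℕ} (hf : Function.Injective f)
    (hmaps : ∀ x ∈ A, f x ∈ B) (hcard : A.card = B.card) : A.image f = B := by
  apply Finset.eq_of_subset_of_card_le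
  · intro y hy
    obtain ⟨x, hx, rfl⟩ := Finset.mem_image.mp hy
    exact hmaps x hx
  · rw [Finset.card_image_of_injective _ hf, hcard]

lemma map_matching {r n : ℕ} {σ τ : ℕ → ℕ} (hτσ : ∀ x, τ (σ x) = x)
    (hIcc : (Finset.Icc 1 (r * n)).image σ = Finset.Icc 1 (r * n))
    {M : Finset (Finset ℕ)} (hM : IsRMatching r n M) :
    IsRMatching r n (M.image (fun e => e.image σ)) := by
  have hinj : Function.Injective σ := fun a b h => by rw [← hτσ a, h, hτσ]
  refine ⟨?_, ?_, ?_⟩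
  · intro e' he'
    obtain ⟨e, he, rfl⟩ := Finset.mem_image.mp he'
    rw [Finset.card_image_of_injective _ hinj]
    exact hM.1 e he
  · intro e' he' f' hf' hne
    obtain ⟨e, he, rfl⟩ := Finset.mem_image.mp he'
    obtain ⟨f, hf, rfl⟩ := Finset.mem_image.mp hf'
    have hef : e ≠ f := by rintro rfl; exact hne rfl
    exact (Finset.disjoint_image hinj).mpr (hM.2.1 e he f hf hef)
  · rw [Finset.image_biUnion]
    have : (M.biUnion fun a => id (a.image σ)) = (M.biUnion id).image σ := by
      rw [Finset.biUnion_image]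
      rfl
    rw [this, hM.2.2, hIcc]

lemma matchings_nonempty {r n : ℕ} (hr : 1 ≤ r) : (matchings r n).Nonempty := by
  refine ⟨(Finset.range n).image (fun i => Finset.Icc (r * i + 1) (r * i + r)),
    mem_matchings.mpr ⟨?_, ?_, ?_⟩⟩
  · intro e he
    obtain ⟨i, _, rfl⟩ := Finset.mem_image.mp he
    rw [Nat.card_Icc]
    omega
  · intro e he f hf hne
    obtain ⟨i, _, rfl⟩ := Finset.mem_image.mp he
    obtain ⟨j, _, rfl⟩ := Finset.mem_image.mp hf
    have hij : i ≠ j := by rintro rfl; exact hne rfl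
    rw [Finset.disjoint_left]
    intro x hx hx'
    rw [Finset.mem_Icc] at hx hx'
    rcases Nat.lt_or_ge i j with h | h
    · have : r * i + r ≤ r * j := by
        calc r * i + r = r * (i + 1) := by ring
          _ ≤ r * j := Nat.mul_le_mul_left r h
      omega
    · have hji : j < i := lt_of_le_of_ne h (Ne.symm hij)
      have : r * j + r ≤ r * i := by
        calc r * j + r = r * (j + 1) := by ring
          _ ≤ r * i := Nat.mul_le_mul_left r hji
      omega
  · ext x
    simp only [Finset.mem_biUnion, Finset.mem_image, Finset.mem_range, id_eq,
      Finset.mem_Icc]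
    constructor
    · rintro ⟨e, ⟨i, hi, rfl⟩, hx⟩
      rw [Finset.mem_Icc] at hx
      have : r * i + r ≤ r * n := by
        calc r * i + r = r * (i + 1) := by ring
          _ ≤ r * n := Nat.mul_le_mul_left r hi
      omega
    · rintro ⟨hx1, hx2⟩
      refine ⟨Finset.Icc (r * ((x - 1) / r) + 1) (r * ((x - 1) / r) + r),
        ⟨(x - 1) / r, ?_, rfl⟩, ?_⟩
      · by_contra hcon
        push_neg at hcon
        have : r * n ≤ r * ((x - 1) / r) := Nat.mul_le_mul_left r hcon
        have h2 : r * ((x - 1) / r) ≤ x - 1 := Nat.mul_div_le _ _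
        omega
      · rw [Finset.mem_Icc]
        have h1 := Nat.div_add_mod (x - 1) r
        have h2 : (x - 1) % r < r := Nat.mod_lt _ (by omega)
        omega

lemma count_eq {r n : ℕ} {S T : Finset ℕ}
    (hS : S ∈ Finset.powersetCard r (Finset.Icc 1 (r * n)))
    (hT : T ∈ Finset.powersetCard r (Finset.Icc 1 (r * n))) :
    ((matchings r n).filter (fun M => S ∈ M)).card
      = ((matchings r n).filter (fun M => T ∈ M)).card := by
  obtain ⟨hSs, hSc⟩ := Finset.mem_powersetCard.mp hS
  obtain ⟨hTs, hTc⟩ := Finset.mem_powersetCard.mp hT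
  set I := Finset.Icc 1 (r * n) with hIdef
  have hc1 : S.card = T.card := by rw [hSc, hTc]
  have hc2 : (I \ S).card = (I \ T).card := by
    rw [Finset.card_sdiff_of_subset hSs, Finset.card_sdiff_of_subset hTs, hSc, hTc]
  let e1 : S ≃ T := Finset.equivOfCardEq hc1
  let e2 : ((I \ S) : Finset ℕ) ≃ ((I \ T) : Finset ℕ) := Finset.equivOfCardEq hc2
  set σ := pmap S T I e1 e2 with hσ
  set τ := pmap T S I e1.symm e2.symm with hτ
  have hτσ : ∀ x, τ (σ x) = x := pmap_inv hTs e1 e2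
  have hστ : ∀ x, σ (τ x) = x := by
    intro x
    have h := pmap_inv hSs e1.symm e2.symm x
    simpa using h
  have hinjσ : Function.Injective σ := fun a b h => by rw [← hτσ a, h, hτσ]
  have hinjτ : Function.Injective τ := fun a b h => by rw [← hστ a, h, hστ]
  have hmapsσ := pmap_maps hTs e1 e2
  have hmapsτ := pmap_maps hSs e1.symm e2.symm
  have hIccσ : I.image σ = I := image_eq_of_maps hinjσ hmapsσ.2 rfl
  have hIccτ : I.image τ = I := image_eq_of_maps hinjτ hmapsτ.2 rfl
  have hSTσ : S.image σ = T := image_eq_of_maps hinjσ hmapsσ.1 hc1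
  have hTSτ : T.image τ = S := image_eq_of_maps hinjτ hmapsτ.1 hc1.symm
  have himg_invστ : ∀ e : Finset ℕ, (e.image σ).image τ = e := by
    intro e
    rw [Finset.image_image]
    have : (τ ∘ σ) = id := funext hτσ
    rw [this, Finset.image_id]
  have himg_invτσ : ∀ e : Finset ℕ, (e.image τ).image σ = e := by
    intro e
    rw [Finset.image_image]
    have : (σ ∘ τ) = id := funext hστ
    rw [this, Finset.image_id]
  apply Finset.card_nbij' (fun M => M.image (fun e => e.image σ))
      (fun M => M.image (fun e => e.image τ))
  · intro M hM
    rw [Finset.mem_coe, Finset.mem_filter] at hM ⊢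
    refine ⟨mem_matchings.mpr (map_matching hτσ hIccσ (mem_matchings.mp hM.1)), ?_⟩
    rw [← hSTσ]
    exact Finset.mem_image_of_mem _ hM.2
  · intro M hM
    rw [Finset.mem_coe, Finset.mem_filter] at hM ⊢
    refine ⟨mem_matchings.mpr (map_matching hστ hIccτ (mem_matchings.mp hM.1)), ?_⟩
    rw [← hTSτ]
    exact Finset.mem_image_of_mem _ hM.2
  · intro M _
    dsimp only
    rw [Finset.image_image]
    have hcomp : ((fun e : Finset ℕ => e.image τ) ∘ (fun e : Finset ℕ => e.image σ))
        = id := funext himg_invστ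
    rw [hcomp, Finset.image_id]
  · intro M _
    dsimp only
    rw [Finset.image_image]
    have hcomp : ((fun e : Finset ℕ => e.image σ) ∘ (fun e : Finset ℕ => e.image τ))
        = id := funext himg_invτσ
    rw [hcomp, Finset.image_id]

lemma filter_blocks {r n : ℕ} {M : Finset (Finset ℕ)} (hM : IsRMatching r n M) :
    (Finset.powersetCard r (Finset.Icc 1 (r * n))).filter (fun S => S ∈ M) = M := by
  ext e
  simp only [Finset.mem_filter, Finset.mem_powersetCard]
  constructor
  · tauto
  · intro he
    exact ⟨⟨blocks_subset hM he, hM.1 e he⟩, he⟩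

lemma total_count {r n : ℕ} (hr : 1 ≤ r) :
    ∑ S ∈ Finset.powersetCard r (Finset.Icc 1 (r * n)),
        ((matchings r n).filter (fun M => S ∈ M)).card
      = n * (matchings r n).card := by
  have h1 : ∀ S ∈ Finset.powersetCard r (Finset.Icc 1 (r * n)),
      ((matchings r n).filter (fun M => S ∈ M)).card
        = ∑ M ∈ matchings r n, if S ∈ M then 1 else 0 := fun S _ =>
    Finset.card_filter _ _
  rw [Finset.sum_congr rfl h1, Finset.sum_comm]
  have h2 : ∀ M ∈ matchings r n,
      (∑ S ∈ Finset.powersetCard r (Finset.Icc 1 (r * n)),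
        if S ∈ M then 1 else 0) = n := by
    intro M hM
    rw [← Finset.card_filter, filter_blocks (mem_matchings.mp hM),
      card_of_matching hr (mem_matchings.mp hM)]
  rw [Finset.sum_congr rfl h2, Finset.sum_const, smul_eq_mul, mul_comm]

lemma cnt_sum {r n k : ℕ} :
    ∑ M ∈ matchings r n, (M.filter (fun e => e ⊆ Finset.Icc 1 k)).card
      = ∑ S ∈ Finset.powersetCard r (Finset.Icc 1 k),
          ((matchings r n).filter (fun M => S ∈ M)).card := by
  have h1 : ∀ M ∈ matchings r n,
      (M.filter (fun e => e ⊆ Finset.Icc 1 k)).card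
        = ∑ S ∈ Finset.powersetCard r (Finset.Icc 1 k),
            if S ∈ M then 1 else 0 := by
    intro M hM
    rw [← Finset.card_filter]
    congr 1
    ext e
    simp only [Finset.mem_filter, Finset.mem_powersetCard]
    have hM' := mem_matchings.mp hM
    constructor
    · rintro ⟨h1, h2⟩
      exact ⟨⟨h2, hM'.1 e h1⟩, h1⟩
    · tauto
  rw [Finset.sum_congr rfl h1, Finset.sum_comm]
  exact Finset.sum_congr rfl fun S _ => (Finset.card_filter _ _).symm

theorem stmt4 (r n k : ℕ) (hr : 2 ≤ r) (hn : 1 ≤ n) (hk : 1 ≤ k) (hk' : k ≤ r * n - 1) :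
    (∑ M ∈ matchings r n, (sockAt k M : ℚ)) / (matchings r n).card =
      (k : ℚ) - (r * k.choose r : ℚ) / ((r * n - 1).choose (r - 1)) := by
  classical
  have hr1 : 1 ≤ r := by omega
  have hrn : r ≤ r * n := Nat.le_mul_of_pos_right r hn
  have hkrn : k ≤ r * n := by omega
  set N := (matchings r n).card with hN
  have hNpos : 0 < N := Finset.card_pos.mpr (matchings_nonempty hr1)
  set S0 : Finset ℕ := Finset.Icc 1 r with hS0
  have hS0mem : S0 ∈ Finset.powersetCard r (Finset.Icc 1 (r * n)) := by
    rw [Finset.mem_powersetCard]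
    refine ⟨Finset.Icc_subset_Icc le_rfl hrn, ?_⟩
    rw [Nat.card_Icc]; omega
  set c0 := ((matchings r n).filter (fun M => S0 ∈ M)).card with hc0
  have htot : (r * n).choose r * c0 = n * N := by
    have h := total_count (r := r) (n := n) hr1
    rw [Finset.sum_congr rfl (fun S hS => count_eq hS hS0mem), Finset.sum_const,
      smul_eq_mul, Finset.card_powersetCard, Nat.card_Icc] at h
    have e1 : r * n + 1 - 1 = r * n := by omega
    rw [e1] at h
    exact h
  have hch : (r * n).choose r = n * (r * n - 1).choose (r - 1) := by
    have h := Nat.add_one_mul_choose_eq (r * n - 1) (r - 1)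
    have e1 : r * n - 1 + 1 = r * n := by omega
    have e2 : r - 1 + 1 = r := by omega
    rw [e1, e2] at h
    have h2 : r * ((r * n).choose r) = r * (n * (r * n - 1).choose (r - 1)) := by
      calc r * ((r * n).choose r) = (r * n).choose r * r := mul_comm _ _
        _ = r * n * (r * n - 1).choose (r - 1) := h.symm
        _ = r * (n * (r * n - 1).choose (r - 1)) := by ring
    exact Nat.eq_of_mul_eq_mul_left (by omega) h2
  have hC'c0 : (r * n - 1).choose (r - 1) * c0 = N := by
    rw [hch, mul_assoc] at htot
    exact Nat.eq_of_mul_eq_mul_left (by omega) htot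
  have hC'pos : 0 < (r * n - 1).choose (r - 1) := by
    rcases Nat.eq_zero_or_pos ((r * n - 1).choose (r - 1)) with h | h
    · rw [h, zero_mul] at hC'c0; omega
    · exact h
  have hc0pos : 0 < c0 := by
    rcases Nat.eq_zero_or_pos c0 with h | h
    · rw [h, mul_zero] at hC'c0; omega
    · exact h
  have hins : ∑ M ∈ matchings r n, (M.filter (fun e => e ⊆ Finset.Icc 1 k)).card
      = k.choose r * c0 := by
    rw [cnt_sum]
    have hsub : ∀ S ∈ Finset.powersetCard r (Finset.Icc 1 k),
        S ∈ Finset.powersetCard r (Finset.Icc 1 (r * n)) := by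
      intro S hS
      rw [Finset.mem_powersetCard] at hS ⊢
      exact ⟨hS.1.trans (Finset.Icc_subset_Icc le_rfl hkrn), hS.2⟩
    rw [Finset.sum_congr rfl (fun S hS => count_eq (hsub S hS) hS0mem),
      Finset.sum_const, smul_eq_mul, Finset.card_powersetCard, Nat.card_Icc]
    norm_num
    exact Or.inl hc0.symm
  have hmain : (∑ M ∈ matchings r n, sockAt k M) + r * (k.choose r * c0) = k * N := by
    have h1 : ∀ M ∈ matchings r n,
        sockAt k M + r * (M.filter (fun e => e ⊆ Finset.Icc 1 k)).card = k :=
      fun M hM => sockAt_add hr1 (mem_matchings.mp hM) hkrn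
    have h2 := Finset.sum_congr rfl h1
    rw [Finset.sum_add_distrib, ← Finset.mul_sum, hins, Finset.sum_const,
      smul_eq_mul] at h2
    exact h2.trans (mul_comm _ _)
  have hQ : (∑ M ∈ matchings r n, (sockAt k M : ℚ))
      = k * N - r * (k.choose r * c0) := by
    have h := congrArg (fun x : ℕ => (x : ℚ)) hmain
    push_cast at h
    linarith [h]
  rw [hQ]
  have hNne : (N : ℚ) ≠ 0 := Nat.cast_ne_zero.mpr (by omega)
  have hC'ne : (((r * n - 1).choose (r - 1) : ℕ) : ℚ) ≠ 0 := Nat.cast_ne_zero.mpr (by omega)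
  have hc0ne : ((c0 : ℕ) : ℚ) ≠ 0 := Nat.cast_ne_zero.mpr (by omega)
  have hNC : (N : ℚ) = ((r * n - 1).choose (r - 1) : ℚ) * (c0 : ℚ) := by
    exact_mod_cast hC'c0.symm
  rw [hNC]
  field_simp
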